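/- arXiv:2004.05099 — 3 statements merged into one kernel-verified Lean document; each statement's English description precedes it below -/
import Mathlib

section
/- For a (2g+2)-element set B with distinguished subset U of size g+1, and the map T ↦ #(T∘U) on even subsets T (where T∘S = (T∖S)∪(S∖T) is symmetric difference), the number of equivalence classes (mod complementation) of even subsets T with #(T∘U) = g+1 equals binom(2g+2, g+1)/2. -/
/-- The setoid identifying, with its complement, each even-cardinality subset `T` of `B`
whose symmetric difference with a fixed subset `U` has cardinality `g+1`.
(Note that both conditions are preserved by complementation when `|B| = 2g+2`, `|U| = g+1`.) -/
def complSetoidSymmDiff (α : Type*) [Fintype α] [DecidableEq α] (U : Finset α) (g : ℕ) :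
    Setoid {T : Finset α // Even T.card ∧ (symmDiff T U).card = g + 1} where
  r T S := S.1 = T.1 ∨ S.1 = T.1ᶜ
  iseqv := by
    refine ⟨fun T => Or.inl rfl, ?_, ?_⟩
    · rintro T S (h | h)
      · exact Or.inl h.symm
      · exact Or.inr (by rw [h, compl_compl])
    · rintro T S R (h | h) (h' | h')
      · exact Or.inl (h'.trans h)
      · exact Or.inr (by rw [h', h])
      · exact Or.inr (h'.trans h)
      · exact Or.inl (by rw [h', h, compl_compl])

lemma myCardSymmDiff {α : Type*} [DecidableEq α] (s t : Finset α) :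
    (symmDiff s t).card + 2 * (s ∩ t).card = s.card + t.card := by
  rw [symmDiff_def]
  have hu : s \ t ⊔ t \ s = s \ t ∪ t \ s := rfl
  rw [hu, Finset.card_union_of_disjoint disjoint_sdiff_sdiff]
  have h1 := Finset.card_sdiff_add_card_inter s t
  have h2 := Finset.card_sdiff_add_card_inter t s
  rw [Finset.inter_comm] at h2
  omega

lemma myComplSymmDiff {α : Type*} [Fintype α] [DecidableEq α] (a b : Finset α) :
    symmDiff aᶜ b = (symmDiff a b)ᶜ := by
  ext x; simp only [Finset.mem_symmDiff, Finset.mem_compl]; tauto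

instance complSetoidSymmDiff.decRel (α : Type*) [Fintype α] [DecidableEq α] (U : Finset α)
    (g : ℕ) : DecidableRel (complSetoidSymmDiff α U g).r :=
  fun _ _ => inferInstanceAs (Decidable (_ ∨ _))

/-- For a `(2g+2)`-element set `B` with a distinguished subset `U` of size `g+1`, the number
of equivalence classes, modulo complementation, of even-cardinality subsets `T ⊆ B` with
`#(T∘U) = g+1` equals `binom(2g+2, g+1)/2`.  (These classes correspond to the non-vanishing
theta constants in Mumford's characterization of the hyperelliptic locus.) -/
theorem card_even_subsets_symmDiff_mod_complement (g : ℕ) (α : Type*) [Fintype α]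
    [DecidableEq α] (hα : Fintype.card α = 2 * g + 2) (U : Finset α) (hU : U.card = g + 1) :
    Nat.card (Quotient (complSetoidSymmDiff α U g)) = Nat.choose (2 * g + 2) (g + 1) / 2 := by
  classical
  have hcompl : ∀ T : Finset α, Even T.card → (symmDiff T U).card = g + 1 →
      Even Tᶜ.card ∧ (symmDiff Tᶜ U).card = g + 1 := by
    intro T h1 h2
    have hc : Tᶜ.card = Fintype.card α - T.card := Finset.card_compl T
    have hTle : T.card ≤ Fintype.card α := Finset.card_le_univ T
    rw [Nat.even_iff] at h1 ⊢
    constructor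
    · omega
    · rw [myComplSymmDiff, Finset.card_compl, h2, hα]
      omega
  set s := complSetoidSymmDiff α U g with hs
  have e : {T : Finset α // Even T.card ∧ (symmDiff T U).card = g + 1} ≃
      {W : Finset α // W.card = g + 1} := by
    refine ⟨fun T => ⟨symmDiff T.1 U, T.2.2⟩, fun W => ⟨symmDiff W.1 U, ?_, ?_⟩, ?_, ?_⟩
    · have := myCardSymmDiff W.1 U
      have hle : (W.1 ∩ U).card ≤ U.card := Finset.card_le_card (Finset.inter_subset_right)
      rw [Nat.even_iff]
      omega
    · rw [symmDiff_symmDiff_cancel_right]; exact W.2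
    · intro T; ext1; simp [symmDiff_symmDiff_cancel_right]
    · intro W; ext1; simp [symmDiff_symmDiff_cancel_right]
  have hcardS : Fintype.card {T : Finset α // Even T.card ∧ (symmDiff T U).card = g + 1} =
      Nat.choose (2 * g + 2) (g + 1) := by
    rw [Fintype.card_congr e, Fintype.card_finset_len, hα]
  -- each equivalence class has exactly two elements
  have hfiber : ∀ q : Quotient s,
      Fintype.card {x : {T : Finset α // Even T.card ∧ (symmDiff T U).card = g + 1} //
        Quotient.mk s x = q} = 2 := by
    intro q
    induction q using Quotient.inductionOn with
    | h T =>
      rw [← Nat.card_eq_fintype_card, Nat.card_eq_two_iff]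
      have hTc : Even T.1ᶜ.card ∧ (symmDiff T.1ᶜ U).card = g + 1 :=
        hcompl T.1 T.2.1 T.2.2
      have hne : T.1 ≠ T.1ᶜ := by
        intro h
        have hpos : 0 < Fintype.card α := by omega
        obtain ⟨x⟩ := Fintype.card_pos_iff.mp hpos
        by_cases hxT : x ∈ T.1
        · exact (Finset.mem_compl.mp (h ▸ hxT)) hxT
        · exact hxT (h ▸ Finset.mem_compl.mpr hxT)
      refine ⟨⟨T, rfl⟩, ⟨⟨T.1ᶜ, hTc⟩, Quotient.sound (Or.inr (compl_compl T.1).symm)⟩, ?_, ?_⟩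
      · intro h
        exact hne (congrArg (fun z => z.1.1) h)
      · rw [Set.eq_univ_iff_forall]
        rintro ⟨x, hx⟩
        have hrel : s.r x T := Quotient.exact hx
        rcases hrel with h | h
        · left; exact Subtype.ext (Subtype.ext h.symm)
        · have hx1 : x.1 = T.1ᶜ := by rw [h, compl_compl]
          right; exact Subtype.ext (Subtype.ext hx1)
  have hsum : Fintype.card {T : Finset α // Even T.card ∧ (symmDiff T U).card = g + 1} =
      2 * Fintype.card (Quotient s) := by
    rw [Fintype.card_congr (Equiv.sigmaFiberEquiv (Quotient.mk s)).symm, Fintype.card_sigma]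
    simp [hfiber, Finset.sum_const, mul_comm]
  rw [Nat.card_eq_fintype_card]
  omega
end

section
/- The addition formula for theta functions: θ[ε,δ](2τ,2z)·θ[ε+ε',δ](2τ,2w) = 2^{-g} Σ_{σ∈(Z/2)^g} (-1)^{⟨ε,σ⟩} θ[ε',δ+σ](τ,z+w)·θ[ε',σ](τ,z−w), for all ε,ε',δ ∈ {0,1}^g, τ ∈ H_g, z,w ∈ C^g. -/
open Complex

namespace ThetaAux

lemma posdef_lb {g : ℕ} {Y : Matrix (Fin g) (Fin g) ℝ} (hY : Y.PosDef) :
    ∃ c : ℝ, 0 < c ∧ ∀ v : Fin g → ℝ,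
      c * (∑ i, v i ^ 2) ≤ ∑ i, ∑ j, v i * Y i j * v j := by
  have hquad : ∀ v : Fin g → ℝ, ∑ i, ∑ j, v i * Y i j * v j =
      dotProduct v (Y.mulVec v) := by
    intro v
    simp only [dotProduct, Matrix.mulVec, Finset.mul_sum]
    exact Finset.sum_congr rfl fun i _ => Finset.sum_congr rfl fun j _ => by ring
  rcases Nat.eq_zero_or_pos g with hg | hg
  · subst hg
    exact ⟨1, one_pos, fun v => by simp⟩
  haveI : Nonempty (Fin g) := ⟨⟨0, hg⟩⟩
  set f : (Fin g → ℝ) → ℝ := fun v => ∑ i, ∑ j, v i * Y i j * v j with hf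
  have hcont : Continuous f := by
    apply continuous_finset_sum _ fun i _ => ?_
    apply continuous_finset_sum _ fun j _ => ?_
    exact ((continuous_apply i).mul continuous_const).mul (continuous_apply j)
  have hsphere : IsCompact (Metric.sphere (0 : Fin g → ℝ) 1) := isCompact_sphere _ _
  have hne : (Metric.sphere (0 : Fin g → ℝ) 1).Nonempty := by
    refine ⟨fun _ => (1 : ℝ), ?_⟩
    simp [Metric.mem_sphere, dist_zero_right]
  obtain ⟨v₀, hv₀, hmin⟩ := hsphere.exists_isMinOn hne hcont.continuousOn
  have hv₀norm : ‖v₀‖ = 1 := by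
    have := Metric.mem_sphere.mp hv₀
    rwa [dist_zero_right] at this
  have hv₀ne : v₀ ≠ 0 := by
    intro h0; rw [h0, norm_zero] at hv₀norm; norm_num at hv₀norm
  have hc0 : 0 < f v₀ := by
    have h := hY.dotProduct_mulVec_pos hv₀ne
    rw [star_trivial] at h
    simpa [hf, hquad v₀] using h
  refine ⟨f v₀ / g, by positivity, fun v => ?_⟩
  rcases eq_or_ne v 0 with rfl | hv
  · simp
  have hnv : 0 < ‖v‖ := norm_pos_iff.mpr hv
  set u : Fin g → ℝ := ‖v‖⁻¹ • v with hu
  have husph : u ∈ Metric.sphere (0 : Fin g → ℝ) 1 := by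
    rw [Metric.mem_sphere, dist_zero_right, hu, norm_smul, norm_inv, norm_norm,
      inv_mul_cancel₀ hnv.ne']
  have hfu : f u = ‖v‖⁻¹ ^ 2 * f v := by
    rw [hf]
    simp only [hu, Pi.smul_apply, smul_eq_mul, Finset.mul_sum]
    exact Finset.sum_congr rfl fun i _ => Finset.sum_congr rfl fun j _ => by ring
  have h1 : f v₀ ≤ f u := isMinOn_iff.mp hmin u husph
  have key : ‖v‖ ^ 2 * f v₀ ≤ f v := by
    rw [hfu] at h1
    have h2 := mul_le_mul_of_nonneg_left h1 (sq_nonneg ‖v‖)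
    have h3 : ‖v‖ ^ 2 * (‖v‖⁻¹ ^ 2 * f v) = f v := by
      field_simp
    rwa [h3] at h2
  have hsq : ∑ i, v i ^ 2 ≤ (g : ℝ) * ‖v‖ ^ 2 := by
    have : ∀ i ∈ Finset.univ, v i ^ 2 ≤ ‖v‖ ^ 2 := by
      intro i _
      have h4 : |v i| ≤ ‖v‖ := by
        simpa using norm_le_pi_norm v i
      calc v i ^ 2 = |v i| ^ 2 := (_root_.sq_abs _).symm
        _ ≤ ‖v‖ ^ 2 := pow_le_pow_left₀ (abs_nonneg _) h4 2
    calc ∑ i, v i ^ 2 ≤ ∑ _i : Fin g, ‖v‖ ^ 2 := Finset.sum_le_sum this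
      _ = (g : ℝ) * ‖v‖ ^ 2 := by simp [Finset.sum_const, nsmul_eq_mul]
  calc (f v₀ / g) * ∑ i, v i ^ 2 ≤ (f v₀ / g) * ((g : ℝ) * ‖v‖ ^ 2) := by
        apply mul_le_mul_of_nonneg_left hsq
        positivity
    _ = ‖v‖ ^ 2 * f v₀ := by
        field_simp
    _ ≤ ∑ i, ∑ j, v i * Y i j * v j := by simpa [hf] using key

lemma summable_pi_exp (g : ℕ) :
    Summable fun m : Fin g → ℤ => ∏ i, Real.exp (-|(m i : ℝ)|) := by
  induction g with
  | zero => exact Summable.of_finite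
  | succ n ih =>
    have h1 : Summable fun k : ℤ => Real.exp (-|(k : ℝ)|) := by
      have hgeo : Summable fun n : ℕ => Real.exp (-1) ^ n :=
        summable_geometric_of_lt_one (Real.exp_pos _).le
          (by rw [Real.exp_lt_one_iff]; norm_num)
      apply Summable.of_nat_of_neg
      · refine hgeo.congr fun k => ?_
        rw [← Real.exp_nat_mul]
        congr 1
        push_cast
        rw [_root_.abs_of_nonneg (by positivity : (0:ℝ) ≤ (k:ℝ))]
        ring
      · refine hgeo.congr fun k => ?_
        rw [← Real.exp_nat_mul]
        congr 1
        push_cast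
        rw [abs_neg, _root_.abs_of_nonneg (by positivity : (0:ℝ) ≤ (k:ℝ))]
        ring
    have h2 := h1.mul_of_nonneg ih (fun k => (Real.exp_pos _).le)
      (fun v => Finset.prod_nonneg fun i _ => (Real.exp_pos _).le)
    refine (Equiv.summable_iff (Fin.consEquiv (fun _ : Fin (n + 1) => ℤ))).mp ?_
    refine h2.congr fun p => ?_
    show _ = ∏ i, Real.exp (-|((Fin.cons p.1 p.2 : Fin (n+1) → ℤ) i : ℝ)|)
    rw [Fin.prod_univ_succ]
    simp [Fin.cons_zero, Fin.cons_succ]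

lemma summable_exp_re {g : ℕ} {Y : Matrix (Fin g) (Fin g) ℝ} (hY : Y.PosDef)
    (a t : Fin g → ℝ) :
    Summable fun m : Fin g → ℤ =>
      Real.exp (-Real.pi * ((∑ i, ∑ j, ((m i : ℝ) + a i) * Y i j * ((m j : ℝ) + a j)) +
        2 * ∑ i, ((m i : ℝ) + a i) * t i)) := by
  obtain ⟨c, hc, hQ⟩ := posdef_lb hY
  set K : ℝ := ∑ i, ((2 * Real.pi * |t i| + 1) ^ 2 / (4 * (Real.pi * c)) + |a i|) with hK
  have hbound : ∀ m : Fin g → ℤ,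
      Real.exp (-Real.pi * ((∑ i, ∑ j, ((m i : ℝ) + a i) * Y i j * ((m j : ℝ) + a j)) +
        2 * ∑ i, ((m i : ℝ) + a i) * t i)) ≤
      Real.exp K * ∏ i, Real.exp (-|(m i : ℝ)|) := by
    intro m
    rw [← Real.exp_sum, ← Real.exp_add, Real.exp_le_exp]
    set u : Fin g → ℝ := fun i => (m i : ℝ) + a i with hu
    have h1 : c * ∑ i, u i ^ 2 ≤ ∑ i, ∑ j, u i * Y i j * u j := hQ u
    have h2 : ∀ i : Fin g,
        -(Real.pi * c) * u i ^ 2 + 2 * Real.pi * |t i| * |u i| + (|u i| + |a i|) ≤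
        (2 * Real.pi * |t i| + 1) ^ 2 / (4 * (Real.pi * c)) + |a i| := by
      intro i
      have hA : 0 < Real.pi * c := by positivity
      have hB : (2 * Real.pi * |t i| + 1) ^ 2 / (4 * (Real.pi * c)) * (4 * (Real.pi * c)) =
          (2 * Real.pi * |t i| + 1) ^ 2 := div_mul_cancel₀ _ (by positivity)
      have hkey : 4 * (Real.pi * c) * ((Real.pi * c) * |u i| ^ 2 -
          (2 * Real.pi * |t i| + 1) * |u i| +
          (2 * Real.pi * |t i| + 1) ^ 2 / (4 * (Real.pi * c))) =
          (2 * (Real.pi * c) * |u i| - (2 * Real.pi * |t i| + 1)) ^ 2 := by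
        linear_combination hB
      have h00 := sq_nonneg (2 * (Real.pi * c) * |u i| - (2 * Real.pi * |t i| + 1))
      rw [← hkey] at h00
      have h0 := (mul_nonneg_iff_of_pos_left (by positivity : (0:ℝ) < 4 * (Real.pi * c))).mp h00
      have husq : u i ^ 2 = |u i| ^ 2 := (_root_.sq_abs _).symm
      rw [husq]
      linarith [h0]
    have h3 : ∑ i, |(m i : ℝ)| ≤ ∑ i, (|u i| + |a i|) := by
      refine Finset.sum_le_sum fun i _ => ?_
      have hmi : (m i : ℝ) = u i - a i := by rw [hu]; ring
      rw [hmi]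
      exact abs_sub (u i) (a i)
    have h4 : -(∑ i, u i * t i) ≤ ∑ i, |u i| * |t i| := by
      rw [← Finset.sum_neg_distrib]
      refine Finset.sum_le_sum fun i _ => ?_
      calc -(u i * t i) ≤ |u i * t i| := neg_le_abs _
        _ = |u i| * |t i| := abs_mul _ _
    have ha : -Real.pi * (∑ i, ∑ j, u i * Y i j * u j) ≤ -Real.pi * (c * ∑ i, u i ^ 2) := by
      nlinarith [Real.pi_pos, h1]
    have hb : -Real.pi * (2 * ∑ i, u i * t i) ≤ 2 * Real.pi * ∑ i, |u i| * |t i| := by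
      nlinarith [Real.pi_pos, h4]
    have hc1 : -Real.pi * (c * ∑ i, u i ^ 2) = ∑ i, -(Real.pi * c) * u i ^ 2 := by
      rw [show -Real.pi * (c * ∑ i, u i ^ 2) = (-(Real.pi * c)) * ∑ i, u i ^ 2 by ring,
        Finset.mul_sum]
    have hc2 : 2 * Real.pi * ∑ i, |u i| * |t i| = ∑ i, 2 * Real.pi * |t i| * |u i| := by
      rw [Finset.mul_sum]
      exact Finset.sum_congr rfl fun i _ => by ring
    have h5 : ∑ i, (-(Real.pi * c) * u i ^ 2 + 2 * Real.pi * |t i| * |u i| + (|u i| + |a i|)) ≤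
        K := by
      rw [hK]
      exact Finset.sum_le_sum fun i _ => h2 i
    have h6 : ∑ i, (-(Real.pi * c) * u i ^ 2 + 2 * Real.pi * |t i| * |u i| + (|u i| + |a i|)) =
        (∑ i, -(Real.pi * c) * u i ^ 2) + (∑ i, 2 * Real.pi * |t i| * |u i|) +
          ∑ i, (|u i| + |a i|) := by
      rw [← Finset.sum_add_distrib, ← Finset.sum_add_distrib]
    have h7 : ∑ i, -|(m i : ℝ)| = -∑ i, |(m i : ℝ)| := by
      rw [Finset.sum_neg_distrib]
    linarith [ha, hb, h3, h5, h6.symm.le, h6.le]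
  have hpos : ∀ m : Fin g → ℤ, 0 ≤
      Real.exp (-Real.pi * ((∑ i, ∑ j, ((m i : ℝ) + a i) * Y i j * ((m j : ℝ) + a j)) +
        2 * ∑ i, ((m i : ℝ) + a i) * t i)) := fun m => (Real.exp_pos _).le
  exact Summable.of_nonneg_of_le hpos hbound ((summable_pi_exp g).mul_left _)

end ThetaAux

/-- A period matrix: a complex symmetric `g×g` matrix with positive definite
imaginary part (a point of the Siegel upper half-space `ℍ_g`). -/
def IsPeriodMatrix {g : ℕ} (τ : Matrix (Fin g) (Fin g) ℂ) : Prop :=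
  τ.IsSymm ∧ (Matrix.of fun i j => (τ i j).im).PosDef

/-- The first order theta function with characteristic `[ε,δ]`, `ε, δ ∈ ℤ^g`:
`θ[ε,δ](τ,z) = Σ_{m ∈ ℤ^g} exp(πi[(m+ε/2)ᵗ τ (m+ε/2) + 2(m+ε/2)ᵗ(z+δ/2)])`. -/
noncomputable def theta {g : ℕ} (ε δ : Fin g → ℤ) (τ : Matrix (Fin g) (Fin g) ℂ)
    (z : Fin g → ℂ) : ℂ :=
  ∑' m : Fin g → ℤ,
    Complex.exp ((Real.pi : ℂ) * Complex.I *
      ((∑ i, ∑ j, ((m i : ℂ) + (ε i : ℂ) / 2) * τ i j * ((m j : ℂ) + (ε j : ℂ) / 2)) +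
        2 * ∑ i, ((m i : ℂ) + (ε i : ℂ) / 2) * (z i + (δ i : ℂ) / 2)))

namespace ThetaAux

variable {g : ℕ}

/-- The summand of the theta series. -/
noncomputable def thetaTerm (ε δ : Fin g → ℤ) (τ : Matrix (Fin g) (Fin g) ℂ)
    (z : Fin g → ℂ) (m : Fin g → ℤ) : ℂ :=
  Complex.exp ((Real.pi : ℂ) * Complex.I *
    ((∑ i, ∑ j, ((m i : ℂ) + (ε i : ℂ) / 2) * τ i j * ((m j : ℂ) + (ε j : ℂ) / 2)) +
      2 * ∑ i, ((m i : ℂ) + (ε i : ℂ) / 2) * (z i + (δ i : ℂ) / 2)))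

lemma theta_eq (ε δ : Fin g → ℤ) (τ : Matrix (Fin g) (Fin g) ℂ) (z : Fin g → ℂ) :
    theta ε δ τ z = ∑' m, thetaTerm ε δ τ z m := rfl

lemma norm_thetaTerm (ε δ : Fin g → ℤ) (τ : Matrix (Fin g) (Fin g) ℂ)
    (z : Fin g → ℂ) (m : Fin g → ℤ) :
    ‖thetaTerm ε δ τ z m‖ =
      Real.exp (-Real.pi *
        ((∑ i, ∑ j, ((m i : ℝ) + (ε i : ℝ) / 2) * (τ i j).im * ((m j : ℝ) + (ε j : ℝ) / 2)) +
          2 * ∑ i, ((m i : ℝ) + (ε i : ℝ) / 2) * (z i).im)) := by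
  rw [thetaTerm, Complex.norm_exp]
  congr 1
  have h1 : ∀ E : ℂ, ((Real.pi : ℂ) * Complex.I * E).re = -Real.pi * E.im := by
    intro E
    simp [Complex.mul_re, Complex.mul_im]
  rw [h1]
  congr 1
  have hcast : ∀ k : Fin g, ((m k : ℂ) + (ε k : ℂ) / 2) =
      ((((m k : ℝ) + (ε k : ℝ) / 2 : ℝ)) : ℂ) := fun k => by push_cast; ring
  have h2S : ∀ S : ℂ, ((2 : ℂ) * S).im = 2 * S.im := fun S => by simp
  rw [Complex.add_im, h2S]
  congr 1
  · rw [Complex.im_sum]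
    refine Finset.sum_congr rfl fun i _ => ?_
    rw [Complex.im_sum]
    refine Finset.sum_congr rfl fun j _ => ?_
    rw [hcast i, hcast j]
    simp [Complex.mul_im, Complex.mul_re]
  · congr 1
    rw [Complex.im_sum]
    refine Finset.sum_congr rfl fun i _ => ?_
    have hδc : z i + (δ i : ℂ) / 2 = z i + (((δ i : ℝ) / 2 : ℝ) : ℂ) := by push_cast; ring
    rw [hcast i, hδc]
    simp [Complex.mul_im, Complex.add_im]

lemma summable_norm_thetaTerm (ε δ : Fin g → ℤ) {τ : Matrix (Fin g) (Fin g) ℂ}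
    (hτ : IsPeriodMatrix τ) (z : Fin g → ℂ) :
    Summable fun m : Fin g → ℤ => ‖thetaTerm ε δ τ z m‖ := by
  have h := summable_exp_re (Y := Matrix.of fun i j => (τ i j).im) hτ.2
    (fun i => (ε i : ℝ) / 2) (fun i => (z i).im)
  refine h.congr fun m => ?_
  rw [norm_thetaTerm]
  simp [Matrix.of_apply]

lemma isPeriodMatrix_two_smul {τ : Matrix (Fin g) (Fin g) ℂ} (hτ : IsPeriodMatrix τ) :
    IsPeriodMatrix ((2 : ℂ) • τ) := by
  obtain ⟨hs, hp⟩ := hτ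
  constructor
  · show Matrix.transpose ((2 : ℂ) • τ) = (2 : ℂ) • τ
    rw [Matrix.transpose_smul, hs]
  · have hM : (Matrix.of fun i j => (((2 : ℂ) • τ) i j).im) =
        (2 : ℝ) • (Matrix.of fun i j => (τ i j).im) := by
      ext i j
      simp [Matrix.smul_apply, Complex.mul_im]
    rw [hM]
    refine Matrix.PosDef.of_dotProduct_mulVec_pos ?_ ?_
    · show Matrix.conjTranspose ((2 : ℝ) • Matrix.of fun i j => (τ i j).im) = _
      rw [Matrix.conjTranspose_smul, hp.1.eq]
      simp
    · intro x hx
      have h2 := hp.dotProduct_mulVec_pos hx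
      have : dotProduct (star x) (((2 : ℝ) • Matrix.of fun i j => (τ i j).im).mulVec x)
          = 2 * dotProduct (star x) ((Matrix.of fun i j => (τ i j).im).mulVec x) := by
        rw [Matrix.smul_mulVec, dotProduct_smul]
        simp
      rw [this]
      positivity

lemma exp_pi_I_int (n : ℤ) : Complex.exp ((Real.pi : ℂ) * Complex.I * n) = (-1 : ℂ) ^ n := by
  rw [mul_comm ((Real.pi : ℂ) * Complex.I) (n : ℂ), Complex.exp_int_mul, Complex.exp_pi_mul_I]

lemma neg_one_zpow_sum (f : Fin g → ℤ) :
    (-1 : ℂ) ^ (∑ i, f i) = ∏ i, (-1 : ℂ) ^ (f i) := by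
  have : ∀ s : Finset (Fin g), (-1:ℂ) ^ (∑ i ∈ s, f i) = ∏ i ∈ s, (-1:ℂ) ^ (f i) := by
    intro s
    induction s using Finset.induction_on with
    | empty => simp
    | insert _ _ h ih =>
      rw [Finset.sum_insert h, Finset.prod_insert h,
        zpow_add₀ (by norm_num : (-1:ℂ) ≠ 0), ih]
  exact this Finset.univ

lemma even_neg_one_zpow {n : ℤ} (h : Even n) : (-1 : ℂ) ^ n = 1 := by
  obtain ⟨k, rfl⟩ := h
  rw [← two_mul, zpow_mul]
  norm_num

lemma sum_zmod_two (F : ZMod 2 → ℂ) : ∑ s : ZMod 2, F s = F 0 + F 1 := by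
  have huniv : (Finset.univ : Finset (ZMod 2)) = {0, 1} := by decide
  rw [huniv, Finset.sum_insert (by decide), Finset.sum_singleton]

lemma thetaTerm_char_shift (ε δ s : Fin g → ℤ) (τ : Matrix (Fin g) (Fin g) ℂ)
    (z : Fin g → ℂ) (m : Fin g → ℤ) :
    thetaTerm ε (δ + s) τ z m =
      thetaTerm ε δ τ z m *
        Complex.exp ((Real.pi : ℂ) * Complex.I *
          ∑ i, ((m i : ℂ) + (ε i : ℂ) / 2) * (s i : ℂ)) := by
  simp only [thetaTerm]
  rw [← Complex.exp_add, ← mul_add]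
  congr 1
  have h2L : 2 * ∑ i, ((m i : ℂ) + (ε i : ℂ) / 2) * (z i + ((δ + s) i : ℂ) / 2)
      = 2 * ∑ i, ((m i : ℂ) + (ε i : ℂ) / 2) * (z i + (δ i : ℂ) / 2) +
        ∑ i, ((m i : ℂ) + (ε i : ℂ) / 2) * (s i : ℂ) := by
    rw [Finset.mul_sum, Finset.mul_sum, ← Finset.sum_add_distrib]
    refine Finset.sum_congr rfl fun i _ => ?_
    have hds : ((δ + s) i : ℂ) = (δ i : ℂ) + (s i : ℂ) := by
      simp only [Pi.add_apply]
      push_cast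
      ring
    rw [hds]
    ring
  linear_combination (Real.pi : ℂ) * Complex.I * h2L

lemma sigma_sum (ε ε' δ : Fin g → ℤ) (τ : Matrix (Fin g) (Fin g) ℂ) (z w : Fin g → ℂ)
    (a b : Fin g → ℤ) :
    ∑ σ : Fin g → ZMod 2,
      (-1:ℂ) ^ (∑ i, ε i * ((σ i).val : ℤ)) *
        (thetaTerm ε' (δ + fun i => ((σ i).val : ℤ)) τ (fun i => z i + w i) a *
          thetaTerm ε' (fun i => ((σ i).val : ℤ)) τ (fun i => z i - w i) b) =
    (∏ i, (1 + (-1:ℂ) ^ (ε i + ε' i + a i + b i))) *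
      (thetaTerm ε' δ τ (fun i => z i + w i) a *
        thetaTerm ε' 0 τ (fun i => z i - w i) b) := by
  have hterm : ∀ σ : Fin g → ZMod 2,
      (-1:ℂ) ^ (∑ i, ε i * ((σ i).val : ℤ)) *
        (thetaTerm ε' (δ + fun i => ((σ i).val : ℤ)) τ (fun i => z i + w i) a *
          thetaTerm ε' (fun i => ((σ i).val : ℤ)) τ (fun i => z i - w i) b) =
      (∏ i, ((-1:ℂ) ^ (ε i + ε' i + a i + b i)) ^ ((σ i).val)) *
        (thetaTerm ε' δ τ (fun i => z i + w i) a *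
          thetaTerm ε' 0 τ (fun i => z i - w i) b) := by
    intro σ
    have hA := thetaTerm_char_shift ε' δ (fun i => ((σ i).val : ℤ)) τ (fun i => z i + w i) a
    have hB0 := thetaTerm_char_shift ε' 0 (fun i => ((σ i).val : ℤ)) τ (fun i => z i - w i) b
    rw [zero_add] at hB0
    rw [hA, hB0]
    have hexp : Complex.exp ((Real.pi : ℂ) * Complex.I *
          ∑ i, ((a i : ℂ) + (ε' i : ℂ) / 2) * ((((σ i).val : ℤ) : ℂ))) *
        Complex.exp ((Real.pi : ℂ) * Complex.I *
          ∑ i, ((b i : ℂ) + (ε' i : ℂ) / 2) * ((((σ i).val : ℤ) : ℂ))) =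
        ∏ i, ((-1:ℂ) ^ (a i + b i + ε' i)) ^ ((σ i).val) := by
      rw [← Complex.exp_add, ← mul_add]
      have hsum : (∑ i, ((a i : ℂ) + (ε' i : ℂ) / 2) * ((((σ i).val : ℤ) : ℂ))) +
          ∑ i, ((b i : ℂ) + (ε' i : ℂ) / 2) * ((((σ i).val : ℤ) : ℂ)) =
          ∑ i, (((a i + b i + ε' i) * ((σ i).val : ℤ) : ℤ) : ℂ) := by
        rw [← Finset.sum_add_distrib]
        refine Finset.sum_congr rfl fun i _ => ?_
        push_cast
        ring
      rw [hsum, Finset.mul_sum, Complex.exp_sum]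
      refine Finset.prod_congr rfl fun i _ => ?_
      rw [exp_pi_I_int ((a i + b i + ε' i) * ((σ i).val : ℤ)),
        zpow_mul, zpow_natCast]
    have hc : (-1:ℂ) ^ (∑ i, ε i * ((σ i).val : ℤ)) =
        ∏ i, ((-1:ℂ) ^ (ε i)) ^ ((σ i).val) := by
      rw [neg_one_zpow_sum]
      refine Finset.prod_congr rfl fun i _ => ?_
      rw [zpow_mul, zpow_natCast]
    calc (-1:ℂ) ^ (∑ i, ε i * ((σ i).val : ℤ)) *
          ((thetaTerm ε' δ τ (fun i => z i + w i) a *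
            Complex.exp ((Real.pi : ℂ) * Complex.I *
              ∑ i, ((a i : ℂ) + (ε' i : ℂ) / 2) * ((((σ i).val : ℤ) : ℂ)))) *
           (thetaTerm ε' 0 τ (fun i => z i - w i) b *
            Complex.exp ((Real.pi : ℂ) * Complex.I *
              ∑ i, ((b i : ℂ) + (ε' i : ℂ) / 2) * ((((σ i).val : ℤ) : ℂ)))))
        = ((-1:ℂ) ^ (∑ i, ε i * ((σ i).val : ℤ)) *
            (Complex.exp ((Real.pi : ℂ) * Complex.I *
              ∑ i, ((a i : ℂ) + (ε' i : ℂ) / 2) * ((((σ i).val : ℤ) : ℂ))) *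
             Complex.exp ((Real.pi : ℂ) * Complex.I *
              ∑ i, ((b i : ℂ) + (ε' i : ℂ) / 2) * ((((σ i).val : ℤ) : ℂ))))) *
          (thetaTerm ε' δ τ (fun i => z i + w i) a *
            thetaTerm ε' 0 τ (fun i => z i - w i) b) := by ring
      _ = ((∏ i, ((-1:ℂ) ^ (ε i)) ^ ((σ i).val)) *
            ∏ i, ((-1:ℂ) ^ (a i + b i + ε' i)) ^ ((σ i).val)) *
          (thetaTerm ε' δ τ (fun i => z i + w i) a *
            thetaTerm ε' 0 τ (fun i => z i - w i) b) := by rw [hexp, hc]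
      _ = (∏ i, ((-1:ℂ) ^ (ε i + ε' i + a i + b i)) ^ ((σ i).val)) *
          (thetaTerm ε' δ τ (fun i => z i + w i) a *
            thetaTerm ε' 0 τ (fun i => z i - w i) b) := by
          rw [← Finset.prod_mul_distrib]
          congr 1
          refine Finset.prod_congr rfl fun i _ => ?_
          rw [← mul_pow, ← zpow_add₀ (by norm_num : (-1:ℂ) ≠ 0)]
          have hee : ε i + (a i + b i + ε' i) = ε i + ε' i + a i + b i := by ring
          rw [hee]
  simp only [hterm]
  rw [← Finset.sum_mul]
  congr 1
  have hps : ∑ σ : Fin g → ZMod 2, ∏ i, ((-1:ℂ) ^ (ε i + ε' i + a i + b i)) ^ ((σ i).val) =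
      ∏ i, ∑ s : ZMod 2, ((-1:ℂ) ^ (ε i + ε' i + a i + b i)) ^ (s.val) := by
    rw [Finset.prod_univ_sum]
    rw [Fintype.piFinset_univ]
  rw [hps]
  refine Finset.prod_congr rfl fun i _ => ?_
  rw [sum_zmod_two (fun s : ZMod 2 => ((-1:ℂ) ^ (ε i + ε' i + a i + b i)) ^ (s.val))]
  norm_num [show ((0 : ZMod 2)).val = 0 from rfl, show ((1 : ZMod 2)).val = 1 from rfl]

lemma pair_eq (ε ε' δ : Fin g → ℤ) (τ : Matrix (Fin g) (Fin g) ℂ) (z w : Fin g → ℂ)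
    (m n : Fin g → ℤ) :
    thetaTerm ε' δ τ (fun i => z i + w i) (fun i => m i + n i + ε i) *
      thetaTerm ε' 0 τ (fun i => z i - w i) (fun i => m i - n i - ε' i) =
    thetaTerm ε δ ((2:ℂ) • τ) (fun i => 2 * z i) m *
      thetaTerm (ε + ε') δ ((2:ℂ) • τ) (fun i => 2 * w i) n := by
  simp only [thetaTerm]
  rw [← Complex.exp_add, ← Complex.exp_add]
  congr 1
  rw [← mul_add, ← mul_add]
  congr 1
  have hQ : (∑ i, ∑ j, (((m i + n i + ε i : ℤ) : ℂ) + (ε' i : ℂ) / 2) * τ i j *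
        (((m j + n j + ε j : ℤ) : ℂ) + (ε' j : ℂ) / 2)) +
      (∑ i, ∑ j, (((m i - n i - ε' i : ℤ) : ℂ) + (ε' i : ℂ) / 2) * τ i j *
        (((m j - n j - ε' j : ℤ) : ℂ) + (ε' j : ℂ) / 2)) =
      (∑ i, ∑ j, ((m i : ℂ) + (ε i : ℂ) / 2) * ((2:ℂ) • τ) i j *
        ((m j : ℂ) + (ε j : ℂ) / 2)) +
      (∑ i, ∑ j, ((n i : ℂ) + ((ε + ε') i : ℂ) / 2) * ((2:ℂ) • τ) i j *
        ((n j : ℂ) + ((ε + ε') j : ℂ) / 2)) := by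
    rw [← Finset.sum_add_distrib, ← Finset.sum_add_distrib]
    refine Finset.sum_congr rfl fun i _ => ?_
    rw [← Finset.sum_add_distrib, ← Finset.sum_add_distrib]
    refine Finset.sum_congr rfl fun j _ => ?_
    simp only [Matrix.smul_apply, smul_eq_mul, Pi.add_apply]
    push_cast
    ring
  have hL : (∑ i, (((m i + n i + ε i : ℤ) : ℂ) + (ε' i : ℂ) / 2) *
        (z i + w i + (δ i : ℂ) / 2)) +
      (∑ i, (((m i - n i - ε' i : ℤ) : ℂ) + (ε' i : ℂ) / 2) *
        (z i - w i + (((0 : Fin g → ℤ)) i : ℂ) / 2)) =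
      (∑ i, ((m i : ℂ) + (ε i : ℂ) / 2) * (2 * z i + (δ i : ℂ) / 2)) +
      (∑ i, ((n i : ℂ) + ((ε + ε') i : ℂ) / 2) * (2 * w i + (δ i : ℂ) / 2)) := by
    rw [← Finset.sum_add_distrib, ← Finset.sum_add_distrib]
    refine Finset.sum_congr rfl fun i _ => ?_
    simp only [Pi.add_apply, Pi.zero_apply]
    push_cast
    ring
  linear_combination hQ + 2 * hL

end ThetaAux

/-- Riemann's addition formula for theta functions: for `ε, ε', δ ∈ {0,1}^g`,
`θ[ε,δ](2τ,2z)·θ[ε+ε',δ](2τ,2w) = 2^{-g} Σ_{σ∈{0,1}^g} (-1)^{⟨ε,σ⟩}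
θ[ε',δ+σ](τ,z+w)·θ[ε',σ](τ,z−w)`. -/
theorem theta_addition_formula (g : ℕ) (ε ε' δ : Fin g → ℤ)
    (hε : ∀ i, ε i = 0 ∨ ε i = 1) (hε' : ∀ i, ε' i = 0 ∨ ε' i = 1)
    (hδ : ∀ i, δ i = 0 ∨ δ i = 1)
    (τ : Matrix (Fin g) (Fin g) ℂ) (hτ : IsPeriodMatrix τ) (z w : Fin g → ℂ) :
    theta ε δ ((2 : ℂ) • τ) (fun i => 2 * z i) *
        theta (ε + ε') δ ((2 : ℂ) • τ) (fun i => 2 * w i) =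
      (1 / 2 ^ g : ℂ) *
        ∑ σ : Fin g → ZMod 2,
          (-1 : ℂ) ^ (∑ i, ε i * ((σ i).val : ℤ)) *
            theta ε' (δ + fun i => ((σ i).val : ℤ)) τ (fun i => z i + w i) *
            theta ε' (fun i => ((σ i).val : ℤ)) τ (fun i => z i - w i) := by
  classical
  have hτ2 := ThetaAux.isPeriodMatrix_two_smul hτ
  set F : ((Fin g → ℤ) × (Fin g → ℤ)) → ℂ := fun p =>
    (1 / 2 ^ g : ℂ) * ((∏ i, (1 + (-1:ℂ) ^ (ε i + ε' i + p.1 i + p.2 i))) *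
      (ThetaAux.thetaTerm ε' δ τ (fun i => z i + w i) p.1 *
       ThetaAux.thetaTerm ε' 0 τ (fun i => z i - w i) p.2)) with hF
  have hstep1 : ∀ σ : Fin g → ZMod 2,
      theta ε' (δ + fun i => ((σ i).val : ℤ)) τ (fun i => z i + w i) *
        theta ε' (fun i => ((σ i).val : ℤ)) τ (fun i => z i - w i)
      = ∑' p : (Fin g → ℤ) × (Fin g → ℤ),
          ThetaAux.thetaTerm ε' (δ + fun i => ((σ i).val : ℤ)) τ (fun i => z i + w i) p.1 *
          ThetaAux.thetaTerm ε' (fun i => ((σ i).val : ℤ)) τ (fun i => z i - w i) p.2 := by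
    intro σ
    rw [ThetaAux.theta_eq, ThetaAux.theta_eq]
    exact tsum_mul_tsum_of_summable_norm
      (ThetaAux.summable_norm_thetaTerm _ _ hτ _)
      (ThetaAux.summable_norm_thetaTerm _ _ hτ _)
  have hsummand : ∀ σ : Fin g → ZMod 2,
      Summable (fun p : (Fin g → ℤ) × (Fin g → ℤ) =>
        (-1:ℂ) ^ (∑ i, ε i * ((σ i).val : ℤ)) *
          (ThetaAux.thetaTerm ε' (δ + fun i => ((σ i).val : ℤ)) τ (fun i => z i + w i) p.1 *
           ThetaAux.thetaTerm ε' (fun i => ((σ i).val : ℤ)) τ (fun i => z i - w i) p.2)) :=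
    fun σ => (summable_mul_of_summable_norm
      (ThetaAux.summable_norm_thetaTerm _ _ hτ _)
      (ThetaAux.summable_norm_thetaTerm _ _ hτ _)).mul_left _
  have hRHS : (1 / 2 ^ g : ℂ) *
        ∑ σ : Fin g → ZMod 2,
          (-1 : ℂ) ^ (∑ i, ε i * ((σ i).val : ℤ)) *
            theta ε' (δ + fun i => ((σ i).val : ℤ)) τ (fun i => z i + w i) *
            theta ε' (fun i => ((σ i).val : ℤ)) τ (fun i => z i - w i)
      = ∑' p : (Fin g → ℤ) × (Fin g → ℤ), F p := by
    calc (1 / 2 ^ g : ℂ) *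
          ∑ σ : Fin g → ZMod 2,
            (-1 : ℂ) ^ (∑ i, ε i * ((σ i).val : ℤ)) *
              theta ε' (δ + fun i => ((σ i).val : ℤ)) τ (fun i => z i + w i) *
              theta ε' (fun i => ((σ i).val : ℤ)) τ (fun i => z i - w i)
        = (1 / 2 ^ g : ℂ) *
          ∑ σ : Fin g → ZMod 2, ∑' p : (Fin g → ℤ) × (Fin g → ℤ),
            (-1:ℂ) ^ (∑ i, ε i * ((σ i).val : ℤ)) *
              (ThetaAux.thetaTerm ε' (δ + fun i => ((σ i).val : ℤ)) τ
                  (fun i => z i + w i) p.1 *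
               ThetaAux.thetaTerm ε' (fun i => ((σ i).val : ℤ)) τ
                  (fun i => z i - w i) p.2) := by
            congr 1
            refine Finset.sum_congr rfl fun σ _ => ?_
            rw [mul_assoc, hstep1 σ, ← tsum_mul_left]
      _ = (1 / 2 ^ g : ℂ) * ∑' p : (Fin g → ℤ) × (Fin g → ℤ),
            ∑ σ : Fin g → ZMod 2,
              (-1:ℂ) ^ (∑ i, ε i * ((σ i).val : ℤ)) *
                (ThetaAux.thetaTerm ε' (δ + fun i => ((σ i).val : ℤ)) τ
                    (fun i => z i + w i) p.1 *
                 ThetaAux.thetaTerm ε' (fun i => ((σ i).val : ℤ)) τ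
                    (fun i => z i - w i) p.2) := by
            congr 1
            exact (Summable.tsum_finsetSum fun σ _ => hsummand σ).symm
      _ = ∑' p : (Fin g → ℤ) × (Fin g → ℤ), F p := by
            rw [← tsum_mul_left]
            refine tsum_congr fun p => ?_
            rw [ThetaAux.sigma_sum ε ε' δ τ z w p.1 p.2, hF]
  rw [hRHS, ThetaAux.theta_eq, ThetaAux.theta_eq]
  set e : ((Fin g → ℤ) × (Fin g → ℤ)) → ((Fin g → ℤ) × (Fin g → ℤ)) := fun q =>
    (fun i => q.1 i + q.2 i + ε i, fun i => q.1 i - q.2 i - ε' i) with he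
  have hinj : Function.Injective e := by
    intro p q h
    rw [he] at h
    simp only [Prod.mk.injEq] at h
    obtain ⟨h1, h2⟩ := h
    have a1 : ∀ i, p.1 i + p.2 i + ε i = q.1 i + q.2 i + ε i := fun i => congrFun h1 i
    have a2 : ∀ i, p.1 i - p.2 i - ε' i = q.1 i - q.2 i - ε' i := fun i => congrFun h2 i
    exact Prod.ext_iff.mpr ⟨funext fun i => by have := a1 i; have := a2 i; omega,
      funext fun i => by have := a1 i; have := a2 i; omega⟩
  have hsupp : Function.support F ⊆ Set.range e := by
    intro p hp
    simp only [Function.mem_support] at hp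
    have hev : ∀ i, Even (ε i + ε' i + p.1 i + p.2 i) := by
      intro i
      by_contra hodd
      apply hp
      simp only [hF]
      have h0 : (1 + (-1:ℂ) ^ (ε i + ε' i + p.1 i + p.2 i)) = 0 := by
        rw [(Int.not_even_iff_odd.mp hodd).neg_one_zpow]
        ring
      rw [Finset.prod_eq_zero (Finset.mem_univ i) h0]
      simp
    refine ⟨(fun i => (hev i).choose - ε i, fun i => p.1 i - (hev i).choose), ?_⟩
    simp only [he]
    refine Prod.ext_iff.mpr ⟨funext fun i => ?_, funext fun i => ?_⟩ <;>
      · have hspec := (hev i).choose_spec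
        simp only
        omega
  have hcoeff : ∀ q : (Fin g → ℤ) × (Fin g → ℤ), F (e q) =
      ThetaAux.thetaTerm ε δ ((2:ℂ) • τ) (fun i => 2 * z i) q.1 *
      ThetaAux.thetaTerm (ε + ε') δ ((2:ℂ) • τ) (fun i => 2 * w i) q.2 := by
    intro q
    simp only [hF, he]
    have h1 : ∀ i : Fin g,
        (1 + (-1:ℂ) ^ (ε i + ε' i + (q.1 i + q.2 i + ε i) + (q.1 i - q.2 i - ε' i))) =
          2 := by
      intro i
      have hexp : ε i + ε' i + (q.1 i + q.2 i + ε i) + (q.1 i - q.2 i - ε' i) =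
          2 * (ε i + q.1 i) := by ring
      rw [hexp, ThetaAux.even_neg_one_zpow ⟨ε i + q.1 i, by ring⟩]
      norm_num
    rw [Finset.prod_congr rfl fun i _ => h1 i, Finset.prod_const, Finset.card_univ,
      Fintype.card_fin]
    have h2 : ∀ X : ℂ, (1 / 2 ^ g : ℂ) * ((2:ℂ) ^ g * X) = X := by
      intro X
      rw [one_div, ← mul_assoc, inv_mul_cancel₀ (pow_ne_zero _ two_ne_zero), one_mul]
    rw [h2, ThetaAux.pair_eq ε ε' δ τ z w q.1 q.2]
  have hf := ThetaAux.summable_norm_thetaTerm ε δ hτ2 (fun i => 2 * z i)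
  have hh := ThetaAux.summable_norm_thetaTerm (ε + ε') δ hτ2 (fun i => 2 * w i)
  rw [tsum_mul_tsum_of_summable_norm hf hh, ← hinj.tsum_eq hsupp]
  exact tsum_congr fun q => (hcoeff q).symm
end

section
/- As a special case (ε₁ = δ₁ = 0) of the previous: Grushevsky's cubic relations imply Frobenius' quadratic identity Q[0,0]² = Σ_{k=0}^{g} Q[s_k, e_{k+1}]². -/
variable {g : ℕ} {A : Type*} [CommRing A]

/-- The sign `(-1)^⟨u,v⟩ ∈ A` attached to `u, v ∈ (ℤ/2)^g`. -/
def sgn (A : Type*) [CommRing A] {g : ℕ} (u v : Fin g → ZMod 2) : A :=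
  (-1 : A) ^ (∑ i, (u i).val * (v i).val)

/-- The quadratic expression `Q[ε,δ] = Σ_{σ∈(ℤ/2)^g} (-1)^{⟨σ,δ⟩} Θ[σ]Θ[σ+ε]` attached
to a function `Θ : (ℤ/2)^g → A`. -/
def Qabs (Θ : (Fin g → ZMod 2) → A) (ε δ : Fin g → ZMod 2) : A :=
  ∑ σ : Fin g → ZMod 2, sgn A σ δ * Θ σ * Θ (σ + ε)

/-- `E k` is the basis vector `e_{k+1}` for `0 ≤ k < g`, and `E g = e_{g+1} = 0`. -/
def Evec (g : ℕ) (k : ℕ) : Fin g → ZMod 2 :=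
  if h : k < g then Pi.single ⟨k, h⟩ 1 else 0

/-- `S k = e_1 + ⋯ + e_k` (so `S 0 = 0`). -/
def Svec (g : ℕ) (k : ℕ) : Fin g → ZMod 2 :=
  ∑ j ∈ Finset.range k, Evec g j

/-- Grushevsky's cubic relations imply Frobenius' quadratic identity
`Q[0,0]² = Σ_{k=0}^{g} Q[s_k,e_{k+1}]²` (the case `ε₁ = δ₁ = 0`). -/
theorem cubics_imply_frobenius (g : ℕ) (A : Type*) [CommRing A]
    (Θ : (Fin g → ZMod 2) → A)
    (hcubic : ∀ σ : Fin g → ZMod 2,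
      Qabs Θ 0 0 * Θ σ =
        ∑ k ∈ Finset.range (g + 1),
          sgn A σ (Evec g k) * (Qabs Θ (Svec g k) (Evec g k) * Θ (σ + Svec g k))) :
    Qabs Θ 0 0 ^ 2 =
      ∑ k ∈ Finset.range (g + 1), Qabs Θ (Svec g k) (Evec g k) ^ 2 := by
  have h0 : ∀ σ : Fin g → ZMod 2, sgn A σ 0 = 1 := by
    intro σ; simp [sgn]
  have hQ00 : Qabs Θ 0 0 = ∑ σ : Fin g → ZMod 2, Θ σ * Θ σ := by
    simp [Qabs, h0]
  calc Qabs Θ 0 0 ^ 2 = ∑ σ : Fin g → ZMod 2, (Qabs Θ 0 0 * Θ σ) * Θ σ := by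
        rw [sq]
        nth_rewrite 2 [hQ00]
        rw [Finset.mul_sum]
        exact Finset.sum_congr rfl fun σ _ => by ring
    _ = ∑ σ : Fin g → ZMod 2, (∑ k ∈ Finset.range (g + 1),
          sgn A σ (Evec g k) * (Qabs Θ (Svec g k) (Evec g k) * Θ (σ + Svec g k))) * Θ σ :=
        Finset.sum_congr rfl fun σ _ => by rw [hcubic σ]
    _ = ∑ k ∈ Finset.range (g + 1), Qabs Θ (Svec g k) (Evec g k) *
          ∑ σ : Fin g → ZMod 2, sgn A σ (Evec g k) * Θ σ * Θ (σ + Svec g k) := by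
        simp_rw [Finset.sum_mul]
        rw [Finset.sum_comm]
        refine Finset.sum_congr rfl fun k _ => ?_
        rw [Finset.mul_sum]
        exact Finset.sum_congr rfl fun σ _ => by ring
    _ = ∑ k ∈ Finset.range (g + 1), Qabs Θ (Svec g k) (Evec g k) ^ 2 :=
        Finset.sum_congr rfl fun k _ => by rw [← Qabs, sq]
end
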